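/- arXiv:1403.0350 — 2 statements merged into one kernel-verified Lean document; each statement's English description precedes it below -/
import Mathlib

section
/- Let (M, α) be a contact manifold and H_θ : M → ℝ an S¹-family of positive smooth functions. On the contact fibration π : (M × D², ker(α + H_θ(p) r² dθ)) → D², the horizontal lift with respect to the contact connection of the vector field ∂_θ at a point with r = 1 equals ∂_θ − X_θ, where X_θ is the contact Hamiltonian vector field of H_θ, i.e., the unique vector field satisfying ι_{X_θ} α = H_θ and ι_{X_θ} dα = −dH_θ + dH_θ(R_α) α, with R_α the Reeb field of α. -/
open Set

/-- The exterior differential of a 1-form `β`: `dβ_x(u,v) = (D_u β)(v) - (D_v β)(u)`. -/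
noncomputable def dform {F : Type*} [NormedAddCommGroup F] [NormedSpace ℝ F]
    (β : F → F →L[ℝ] ℝ) (x : F) (u v : F) : ℝ :=
  fderiv ℝ β x u v - fderiv ℝ β x v u

/-- The 1-form `α + H̃(p,q)·(x dy - y dx)` on `M × ℝ²`, i.e. `α + H_θ(p) r² dθ` where
`H̃(p,q) = H_{θ(q)}(p)` is 0-homogeneous in `q`. -/
noncomputable def alphaH {E : Type*} [NormedAddCommGroup E] [NormedSpace ℝ E]
    (α : E → E →L[ℝ] ℝ) (Ht : E × (ℝ × ℝ) → ℝ) (z : E × (ℝ × ℝ)) :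
    (E × (ℝ × ℝ)) →L[ℝ] ℝ :=
  (α z.1).comp (ContinuousLinearMap.fst ℝ E (ℝ × ℝ)) +
    (Ht z * z.2.1) • ((ContinuousLinearMap.snd ℝ ℝ ℝ).comp (ContinuousLinearMap.snd ℝ E (ℝ × ℝ))) -
    (Ht z * z.2.2) • ((ContinuousLinearMap.fst ℝ ℝ ℝ).comp (ContinuousLinearMap.snd ℝ E (ℝ × ℝ)))

lemma alphaH_apply {E : Type*} [NormedAddCommGroup E] [NormedSpace ℝ E]
    (α : E → E →L[ℝ] ℝ) (Ht : E × (ℝ × ℝ) → ℝ) (z w : E × (ℝ × ℝ)) :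
    alphaH α Ht z w = α z.1 w.1 + Ht z * z.2.1 * w.2.2 - Ht z * z.2.2 * w.2.1 := by
  simp [alphaH, mul_assoc]

lemma fderiv_swap {F : Type*} [NormedAddCommGroup F] [NormedSpace ℝ F]
    {β : F → F →L[ℝ] ℝ} {z : F} (hβ : DifferentiableAt ℝ β z) (u v : F) :
    fderiv ℝ β z u v = fderiv ℝ (fun x => β x v) z u := by
  rw [fderiv_clm_apply hβ (differentiableAt_const v)]
  simp

section

variable {E : Type*} [NormedAddCommGroup E] [NormedSpace ℝ E]

lemma Ht_diffAt (Ht : E × (ℝ × ℝ) → ℝ)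
    (hH : ContDiffOn ℝ (⊤ : ℕ∞) Ht {z : E × (ℝ × ℝ) | z.2 ≠ 0})
    {p : E} {q : ℝ × ℝ} (hq : q ≠ 0) : DifferentiableAt ℝ Ht (p, q) := by
  have hopen : IsOpen {z : E × (ℝ × ℝ) | z.2 ≠ 0} :=
    isOpen_ne.preimage continuous_snd
  exact (hH.contDiffAt (hopen.mem_nhds hq)).differentiableAt (by simp)

lemma fderiv_alphaH_apply (α : E → E →L[ℝ] ℝ) (hα : ContDiff ℝ (⊤ : ℕ∞) α)
    (Ht : E × (ℝ × ℝ) → ℝ)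
    (hH : ContDiffOn ℝ (⊤ : ℕ∞) Ht {z : E × (ℝ × ℝ) | z.2 ≠ 0})
    (p : E) {q : ℝ × ℝ} (hq : q ≠ 0) (w u' : E × (ℝ × ℝ)) :
    fderiv ℝ (fun z => alphaH α Ht z w) (p, q) u' =
      fderiv ℝ α p u'.1 w.1
        + (fderiv ℝ Ht (p, q) u' * q.1 + Ht (p, q) * u'.2.1) * w.2.2
        - (fderiv ℝ Ht (p, q) u' * q.2 + Ht (p, q) * u'.2.2) * w.2.1 := by
  have hαp : HasFDerivAt α (fderiv ℝ α p) p :=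
    ((hα.differentiable (by simp)) p).hasFDerivAt
  have hcomp : HasFDerivAt (fun z : E × (ℝ × ℝ) => α z.1)
      ((fderiv ℝ α p).comp (ContinuousLinearMap.fst ℝ E (ℝ × ℝ))) (p, q) :=
    hαp.comp _ hasFDerivAt_fst
  have h1 := hcomp.clm_apply (hasFDerivAt_const w.1 (p, q))
  have hHt : HasFDerivAt Ht (fderiv ℝ Ht (p, q)) (p, q) :=
    (Ht_diffAt Ht hH hq).hasFDerivAt
  have hx : HasFDerivAt (fun z : E × (ℝ × ℝ) => z.2.1)
      ((ContinuousLinearMap.fst ℝ ℝ ℝ).comp (ContinuousLinearMap.snd ℝ E (ℝ × ℝ))) (p, q) :=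
    ((ContinuousLinearMap.fst ℝ ℝ ℝ).comp (ContinuousLinearMap.snd ℝ E (ℝ × ℝ))).hasFDerivAt
  have hy : HasFDerivAt (fun z : E × (ℝ × ℝ) => z.2.2)
      ((ContinuousLinearMap.snd ℝ ℝ ℝ).comp (ContinuousLinearMap.snd ℝ E (ℝ × ℝ))) (p, q) :=
    ((ContinuousLinearMap.snd ℝ ℝ ℝ).comp (ContinuousLinearMap.snd ℝ E (ℝ × ℝ))).hasFDerivAt
  have h2 := (hHt.mul hx).mul_const w.2.2
  have h3 := (hHt.mul hy).mul_const w.2.1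
  have H := (h1.add h2).sub h3
  have Hfun : (fun z : E × (ℝ × ℝ) => alphaH α Ht z w) =
      fun z : E × (ℝ × ℝ) =>
        (α z.1 w.1 + Ht z * z.2.1 * w.2.2) - Ht z * z.2.2 * w.2.1 := by
    funext z
    rw [alphaH_apply]
  rw [Hfun, (show HasFDerivAt (fun z : E × (ℝ × ℝ) =>
      (α z.1 w.1 + Ht z * z.2.1 * w.2.2) - Ht z * z.2.2 * w.2.1) _ (p, q) from H).fderiv]
  simp
  ring

lemma dform_alphaH (α : E → E →L[ℝ] ℝ) (hα : ContDiff ℝ (⊤ : ℕ∞) α)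
    (Ht : E × (ℝ × ℝ) → ℝ)
    (hH : ContDiffOn ℝ (⊤ : ℕ∞) Ht {z : E × (ℝ × ℝ) | z.2 ≠ 0})
    (p : E) {q : ℝ × ℝ} (hq : q ≠ 0) (u : E × (ℝ × ℝ)) (v : E) :
    dform (alphaH α Ht) (p, q) u (v, 0) =
      dform α p u.1 v -
        fderiv ℝ Ht (p, q) (v, 0) * (q.1 * u.2.2 - q.2 * u.2.1) := by
  have hα1 : DifferentiableAt ℝ (fun z : E × (ℝ × ℝ) => α z.1) (p, q) :=
    ((hα.differentiable (by simp)) p).comp (p, q) differentiableAt_fst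
  have hHt : DifferentiableAt ℝ Ht (p, q) := Ht_diffAt Ht hH hq
  have hdiff : DifferentiableAt ℝ (alphaH α Ht) (p, q) := by
    have hA : DifferentiableAt ℝ
        (fun z : E × (ℝ × ℝ) => (α z.1).comp (ContinuousLinearMap.fst ℝ E (ℝ × ℝ))) (p, q) :=
      hα1.clm_comp (differentiableAt_const _)
    have hB : DifferentiableAt ℝ
        (fun z : E × (ℝ × ℝ) => (Ht z * z.2.1) •
          ((ContinuousLinearMap.snd ℝ ℝ ℝ).comp (ContinuousLinearMap.snd ℝ E (ℝ × ℝ)))) (p, q) :=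
      (hHt.mul differentiableAt_snd.fst).smul_const _
    have hC : DifferentiableAt ℝ
        (fun z : E × (ℝ × ℝ) => (Ht z * z.2.2) •
          ((ContinuousLinearMap.fst ℝ ℝ ℝ).comp (ContinuousLinearMap.snd ℝ E (ℝ × ℝ)))) (p, q) :=
      (hHt.mul differentiableAt_snd.snd).smul_const _
    exact (hA.add hB).sub hC
  have hαd : DifferentiableAt ℝ α p := (hα.differentiable (by simp)) p
  rw [dform, fderiv_swap hdiff, fderiv_swap hdiff,
    fderiv_alphaH_apply α hα Ht hH p hq, fderiv_alphaH_apply α hα Ht hH p hq,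
    dform, fderiv_swap hαd, fderiv_swap hαd]
  simp
  ring

lemma fderiv_Ht_slice (Ht : E × (ℝ × ℝ) → ℝ)
    (hH : ContDiffOn ℝ (⊤ : ℕ∞) Ht {z : E × (ℝ × ℝ) | z.2 ≠ 0})
    (p : E) {q : ℝ × ℝ} (hq : q ≠ 0) (v : E) :
    fderiv ℝ (fun p' : E => Ht (p', q)) p v = fderiv ℝ Ht (p, q) (v, 0) := by
  have hproj : HasFDerivAt (fun p' : E => ((p', q) : E × (ℝ × ℝ)))
      ((ContinuousLinearMap.id ℝ E).prod 0) p :=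
    HasFDerivAt.prodMk (hasFDerivAt_id p) (hasFDerivAt_const q p)
  have H : HasFDerivAt (fun p' : E => Ht (p', q))
      ((fderiv ℝ Ht (p, q)).comp ((ContinuousLinearMap.id ℝ E).prod 0)) p :=
    (Ht_diffAt Ht hH hq).hasFDerivAt.comp p hproj
  rw [H.fderiv]
  simp

end

/-- on the contact fibration `π : (M × D², ker(α + H_θ(p) r² dθ)) → D²`, the
horizontal lift (for the contact connection) of `∂_θ` at a point `(p,q)` with `r = |q| = 1`
is `∂_θ - X_θ`, where `X_θ` is the contact Hamiltonian vector field of `H_θ`, i.e. the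
unique vector field with `ι_{X}α = H` and `ι_{X}dα = -dH + dH(R_α) α` (`R_α` the Reeb field).
Horizontality means: the lift projects to `∂_θ` (here `∂_θ = (-q₂, q₁)` on the base), lies
in `ker α_H`, and pairs trivially under `dα_H` with the fiberwise contact distribution
`ξ = {(v,0) : α_p(v) = 0}`; such a lift is moreover unique. -/
theorem stmt_6 {E : Type*} [NormedAddCommGroup E] [NormedSpace ℝ E]
    (α : E → E →L[ℝ] ℝ) (hαsmooth : ContDiff ℝ (⊤ : ℕ∞) α)
    (hαcontact : ∀ x : E, α x ≠ 0 ∧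
      ∀ u : E, α x u = 0 → (∀ v : E, α x v = 0 → dform α x u v = 0) → u = 0)
    (R : E → E) (hReeb : ∀ x, α x (R x) = 1 ∧ ∀ v : E, dform α x (R x) v = 0)
    (Ht : E × (ℝ × ℝ) → ℝ)
    (hHsmooth : ContDiffOn ℝ (⊤ : ℕ∞) Ht {z : E × (ℝ × ℝ) | z.2 ≠ 0})
    (hHhom : ∀ (p : E) (q : ℝ × ℝ) (c : ℝ), 0 < c → Ht (p, c • q) = Ht (p, q))
    (hHpos : ∀ z, 0 < Ht z)
    (X : E × (ℝ × ℝ) → E)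
    (hXham : ∀ (p : E) (q : ℝ × ℝ), α p (X (p, q)) = Ht (p, q))
    (hXdham : ∀ (p : E) (q : ℝ × ℝ) (v : E),
      dform α p (X (p, q)) v =
        -(fderiv ℝ (fun p' : E => Ht (p', q)) p v) +
          fderiv ℝ (fun p' : E => Ht (p', q)) p (R p) * α p v) :
    ∀ (p : E) (q : ℝ × ℝ), q.1 ^ 2 + q.2 ^ 2 = 1 →
      (alphaH α Ht (p, q) (-(X (p, q)), (-q.2, q.1)) = 0 ∧
        (∀ v : E, α p v = 0 →
          dform (alphaH α Ht) (p, q) (-(X (p, q)), (-q.2, q.1)) (v, 0) = 0)) ∧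
      ∀ u : E × (ℝ × ℝ), u.2 = (-q.2, q.1) →
        alphaH α Ht (p, q) u = 0 →
        (∀ v : E, α p v = 0 → dform (alphaH α Ht) (p, q) u (v, 0) = 0) →
        u = (-(X (p, q)), (-q.2, q.1)) := by
  intro p q hq1
  have hq : q ≠ 0 := by
    intro h
    rw [h] at hq1
    norm_num at hq1
  have hdα := dform_alphaH α hαsmooth Ht hHsmooth p hq
  have hslice := fderiv_Ht_slice Ht hHsmooth p hq
  -- `dform α` is linear in the first argument
  have hlin : ∀ (a b v : E), dform α p (a + b) v = dform α p a v + dform α p b v := by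
    intro a b v
    simp [dform]
    ring
  have hneg : ∀ (a v : E), dform α p (-a) v = -dform α p a v := by
    intro a v
    simp [dform]
    ring
  refine ⟨⟨?_, ?_⟩, ?_⟩
  · rw [alphaH_apply]
    simp only [map_neg, hXham]
    linear_combination Ht (p, q) * hq1
  · intro v hv
    rw [hdα]
    simp only [hneg]
    rw [hXdham p q v, hv, hslice]
    linear_combination (-(fderiv ℝ Ht (p, q) (v, 0))) * hq1
  · intro u hu2 hker hhor
    have h1 : α p u.1 = -Ht (p, q) := by
      rw [alphaH_apply, hu2] at hker
      linear_combination hker + (-Ht (p, q)) * hq1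
    have hw : u.1 + X (p, q) = 0 := by
      refine (hαcontact p).2 _ ?_ ?_
      · rw [map_add, h1, hXham]; ring
      · intro v hv
        have h2 := hhor v hv
        rw [hdα, hu2] at h2
        have h3 : dform α p u.1 v = fderiv ℝ Ht (p, q) (v, 0) := by
          linear_combination h2 + fderiv ℝ Ht (p, q) (v, 0) * hq1
        rw [hlin, h3, hXdham p q v, hv, hslice]
        ring
    have h4 : u.1 = -(X (p, q)) := eq_neg_of_add_eq_zero_left hw
    exact Prod.ext h4 hu2
end

section
/- Suppose {φ_θ}, θ ∈ [0,1], is a family of diffeomorphisms of a manifold N whose graphs, under an identification of a neighborhood of the diagonal with a neighborhood of the zero section of J¹(N), are 1-jets of functions f_θ : N → ℝ, and suppose the family is generated by a positive contact Hamiltonian (with respect to the standard contact form dz − λ on J¹(N), positivity of the Hamiltonian on the image). Then ∂f_θ/∂θ > 0 at every point; in particular, if φ_0 = φ_1 (so f_0 = f_1) and N is nonempty, no such positive loop exists. -/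
open Set

/-- model `J¹(N) = N × N* × ℝ` with its standard contact form
`(dz - λ)_{(x,p,z)}(v,w,s) = s - p(v)`. Suppose `{φ_θ}` is an isotopy of `J¹(N)` generated
by a positive contact Hamiltonian (positivity: `α(d/dθ φ_θ(ζ)) > 0` along the flow), which
moves the Legendrian sections: `φ_θ` maps the image of `j¹f_0` onto the image of `j¹f_θ`,
where `j¹f = (id, df, f)`. Then `∂f_θ/∂θ > 0` everywhere; in particular if `N` is nonempty
there is no such positive loop: `f_0 ≠ f_1`. -/
theorem stmt_12 {N : Type*} [NormedAddCommGroup N] [NormedSpace ℝ N]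
    (f : ℝ → N → ℝ)
    (hf : ContDiff ℝ (⊤ : ℕ∞) (fun q : ℝ × N => f q.1 q.2))
    (φ : ℝ → N × ((N →L[ℝ] ℝ) × ℝ) → N × ((N →L[ℝ] ℝ) × ℝ))
    (W : ℝ → N × ((N →L[ℝ] ℝ) × ℝ) → N × ((N →L[ℝ] ℝ) × ℝ))
    (hφ0 : φ 0 = id)
    (hflow : ∀ θ ζ, HasDerivAt (fun t => φ t ζ) (W θ (φ θ ζ)) θ)
    -- positivity of the contact Hamiltonian `H = α(W)` for `α = dz - λ`:
    (hpos : ∀ θ (ζ : N × ((N →L[ℝ] ℝ) × ℝ)), 0 < (W θ ζ).2.2 - ζ.2.1 ((W θ ζ).1))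
    -- the isotopy moves the Legendrian graphs `j¹f_θ`:
    (hgraph : ∀ θ,
      φ θ '' (range (fun x : N => (x, (fderiv ℝ (f 0) x, f 0 x)))) =
        range (fun x : N => (x, (fderiv ℝ (f θ) x, f θ x)))) :
    (∀ (θ : ℝ) (x : N), 0 < deriv (fun t => f t x) θ) ∧
      (Nonempty N → f 0 ≠ f 1) := by
  set F : ℝ × N → ℝ := fun q => f q.1 q.2 with hFdef
  have hF : Differentiable ℝ F := hf.differentiable (by simp)
  have main : ∀ (θ : ℝ) (x : N), 0 < deriv (fun t => f t x) θ := by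
    intro θ₀ x₀
    -- find the starting point ζ on the graph of j¹f₀ whose flow reaches (x₀, df_{θ₀}x₀, f_{θ₀}x₀)
    have hmem : (x₀, (fderiv ℝ (f θ₀) x₀, f θ₀ x₀)) ∈
        φ θ₀ '' (range (fun x : N => (x, (fderiv ℝ (f 0) x, f 0 x)))) := by
      rw [hgraph θ₀]; exact mem_range_self x₀
    obtain ⟨ζ, hζ, hζeq⟩ := hmem
    -- the flow of ζ stays on the moving graphs
    have hont : ∀ t, ∃ y, φ t ζ = (y, (fderiv ℝ (f t) y, f t y)) := by
      intro t
      have h : φ t ζ ∈ range (fun x : N => (x, (fderiv ℝ (f t) x, f t x))) := by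
        rw [← hgraph t]; exact mem_image_of_mem _ hζ
      obtain ⟨y, hy⟩ := h
      exact ⟨y, hy.symm⟩
    set x : ℝ → N := fun t => (φ t ζ).1 with hxdef
    have hxz : ∀ t, (φ t ζ).2.2 = F (t, x t) := by
      intro t
      obtain ⟨y, hy⟩ := hont t
      show (φ t ζ).2.2 = F (t, (φ t ζ).1)
      rw [hy]
    have hx0 : x θ₀ = x₀ := by
      show (φ θ₀ ζ).1 = x₀
      rw [hζeq]
    have hp0 : (φ θ₀ ζ).2.1 = fderiv ℝ (f θ₀) x₀ := by rw [hζeq]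
    have hDφ := hflow θ₀ ζ
    set V := W θ₀ (φ θ₀ ζ) with hV
    have hx' : HasDerivAt x V.1 θ₀ :=
      (ContinuousLinearMap.fst ℝ N ((N →L[ℝ] ℝ) × ℝ)).hasFDerivAt.comp_hasDerivAt θ₀ hDφ
    have hz' : HasDerivAt (fun t => (φ t ζ).2.2) V.2.2 θ₀ :=
      ((ContinuousLinearMap.snd ℝ (N →L[ℝ] ℝ) ℝ).comp
        (ContinuousLinearMap.snd ℝ N ((N →L[ℝ] ℝ) × ℝ))).hasFDerivAt.comp_hasDerivAt θ₀ hDφ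
    set A := fderiv ℝ F (θ₀, x₀) with hA
    have hchain : HasDerivAt (fun t => F (t, x t)) (A (1, V.1)) θ₀ := by
      have hc : HasDerivAt (fun t : ℝ => (t, x t)) ((1 : ℝ), V.1) θ₀ :=
        HasDerivAt.prodMk (hasDerivAt_id θ₀) hx'
      have := ((hF (θ₀, x θ₀)).hasFDerivAt).comp_hasDerivAt θ₀ hc
      rwa [hx0] at this
    have hz'' : HasDerivAt (fun t => F (t, x t)) V.2.2 θ₀ := by
      have heq : (fun t => (φ t ζ).2.2) = fun t => F (t, x t) := funext hxz
      rwa [heq] at hz'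
    have key : A (1, V.1) = V.2.2 := hchain.unique hz''
    -- partial derivative in θ
    have hgθ : HasDerivAt (fun t => f t x₀) (A (1, 0)) θ₀ := by
      have hc : HasDerivAt (fun t : ℝ => (t, x₀)) ((1 : ℝ), (0 : N)) θ₀ :=
        HasDerivAt.prodMk (hasDerivAt_id θ₀) (hasDerivAt_const θ₀ x₀)
      exact ((hF (θ₀, x₀)).hasFDerivAt).comp_hasDerivAt θ₀ hc
    -- partial derivative in x
    have hfθ : fderiv ℝ (f θ₀) x₀ =
        A.comp ((0 : N →L[ℝ] ℝ).prod (ContinuousLinearMap.id ℝ N)) := by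
      have h1 : HasFDerivAt (fun y : N => ((θ₀ : ℝ), y))
          ((0 : N →L[ℝ] ℝ).prod (ContinuousLinearMap.id ℝ N)) x₀ :=
        HasFDerivAt.prodMk (hasFDerivAt_const θ₀ x₀) (hasFDerivAt_id x₀)
      have h2 := ((hF (θ₀, x₀)).hasFDerivAt).comp x₀ h1
      have h3 : HasFDerivAt (f θ₀)
          (A.comp ((0 : N →L[ℝ] ℝ).prod (ContinuousLinearMap.id ℝ N))) x₀ := h2
      exact h3.fderiv
    have hpos' := hpos θ₀ (φ θ₀ ζ)
    rw [hp0, hfθ, ← hV, ← key] at hpos'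
    have hsimp : (A.comp ((0 : N →L[ℝ] ℝ).prod (ContinuousLinearMap.id ℝ N))) V.1
        = A (0, V.1) := rfl
    rw [hsimp] at hpos'
    have : A (1, V.1) - A (0, V.1) = A (1, 0) := by
      rw [← A.map_sub, Prod.mk_sub_mk]
      norm_num
    rw [this] at hpos'
    rwa [hgθ.deriv]
  refine ⟨main, ?_⟩
  rintro ⟨x⟩ heq
  have hmono : StrictMono (fun t => f t x) := by
    apply strictMono_of_deriv_pos
    intro t; exact main t x
  have h01 : f 0 x < f 1 x := hmono (by norm_num)
  rw [heq] at h01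
  exact lt_irrefl _ h01
end
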